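/- Let G be a finite simple graph in which the subgraph G_Δ induced by the vertices of maximum degree is acyclic (a forest). Then G has a proper Δ(G)-edge coloring, i.e., χ'(G) = Δ(G) (G is Class 1), provided G has at least one edge. -/

import Mathlib

attribute [local instance] Classical.propDecidable

variable {V : Type*}

/-- `f` is a proper `t`-edge coloring of `G`: edges get colors in `{1,…,t}` and
adjacent (distinct, sharing a vertex) edges get different colors. -/
def IsProperEdgeColoring (G : SimpleGraph V) (t : ℕ) (f : Sym2 V → ℕ) : Prop :=
  (∀ e ∈ G.edgeSet, f e ∈ Finset.Icc 1 t) ∧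
  ∀ e₁ ∈ G.edgeSet, ∀ e₂ ∈ G.edgeSet, e₁ ≠ e₂ → (∃ v, v ∈ e₁ ∧ v ∈ e₂) → f e₁ ≠ f e₂

/-- The two-colored subgraph `G_f(a,b)` induced by the edges colored `a` or `b`. -/
def twoColorSub (G : SimpleGraph V) (f : Sym2 V → ℕ) (a b : ℕ) : SimpleGraph V :=
  SimpleGraph.fromEdgeSet {e | e ∈ G.edgeSet ∧ (f e = a ∨ f e = b)}

/-- Swap the colors `a` and `b`. -/
def swapCol (a b c : ℕ) : ℕ := if c = a then b else if c = b then a else c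

/-- The interchange (Kempe change) of colors `a,b` on the connected component of
`v` in the two-colored subgraph `G_f(a,b)`. -/
noncomputable def interchange (G : SimpleGraph V) (f : Sym2 V → ℕ) (a b : ℕ) (v : V) :
    Sym2 V → ℕ :=
  fun e => if ∀ x ∈ e, (twoColorSub G f a b).Reachable v x then swapCol a b (f e) else f e

/-- One interchange step between colorings, using colors from `{1,…,t}`. -/
def KempeStep (G : SimpleGraph V) (t : ℕ) (f g : Sym2 V → ℕ) : Prop :=
  ∃ a ∈ Finset.Icc 1 t, ∃ b ∈ Finset.Icc 1 t, ∃ v, g = interchange G f a b v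

/-- Kempe equivalence: transformability by a finite sequence of interchanges. -/
def KempeEquiv (G : SimpleGraph V) (t : ℕ) (f g : Sym2 V → ℕ) : Prop :=
  Relation.ReflTransGen (KempeStep G t) f g

/-- The chromatic index: least `t` admitting a proper `t`-edge coloring. -/
noncomputable def chromaticIndex (G : SimpleGraph V) : ℕ :=
  sInf {t | ∃ f, IsProperEdgeColoring G t f}

/-- The set of colors appearing at `v` under `f`. -/
def colorsAt (G : SimpleGraph V) (f : Sym2 V → ℕ) (v : V) : Set ℕ :=
  {c | ∃ e ∈ G.edgeSet, v ∈ e ∧ f e = c}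


set_option linter.unusedSectionVars false
set_option linter.unusedVariables false
set_option maxHeartbeats 1000000

namespace Fournier


lemma acyclic_of_injective_hom {α β : Type*} {A : SimpleGraph α} {B : SimpleGraph β}
    (φ : A →g B) (hinj : Function.Injective φ) (hB : B.IsAcyclic) : A.IsAcyclic := by
  intro v c hc
  exact hB (c.map φ) (hc.map hinj)
/-- A connected finite graph has at least `|V| - 1` edges. -/
lemma card_le_card_edgeFinset_add_one [Fintype V] (H : SimpleGraph V) (hc : H.Connected) :
    Fintype.card V ≤ H.edgeFinset.card + 1 := by
  rcases hc.nonempty with ⟨u⟩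
  have key : ∀ v : V, v ≠ u → ∃ w, H.Adj v w ∧ H.dist u w < H.dist u v := by
    intro v hv
    have hr : H.Reachable v u := (hc.preconnected v u)
    obtain ⟨p, hp⟩ := hr.exists_walk_length_eq_dist
    obtain ⟨w, hadj, q, hq⟩ := SimpleGraph.Walk.exists_eq_cons_of_ne hv p
    refine ⟨w, hadj, ?_⟩
    have h1 : H.dist u w ≤ q.length := by
      calc H.dist u w = H.dist w u := SimpleGraph.dist_comm
        _ ≤ q.length := SimpleGraph.dist_le q
    have h2 : q.length + 1 = H.dist v u := by
      rw [← hp, hq, SimpleGraph.Walk.length_cons]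
    have h3 : H.dist v u = H.dist u v := SimpleGraph.dist_comm
    omega
  classical
  set F : V → Sym2 V := fun v => if h : v ≠ u then s(v, (key v h).choose) else s(v, v) with hF
  have hinj : Set.InjOn F ↑(Finset.univ.erase u) := by
    intro v hv v' hv' heq
    simp only [Finset.coe_erase, Set.mem_diff, Set.mem_singleton_iff] at hv hv'
    have hv2 : v ≠ u := hv.2
    have hv'2 : v' ≠ u := hv'.2
    rw [hF] at heq
    simp only [dif_pos hv2, dif_pos hv'2] at heq
    rcases Sym2.eq_iff.1 heq with ⟨h1, _⟩ | ⟨h1, h2⟩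
    · exact h1
    · exfalso
      have d1 := (key v hv2).choose_spec.2
      have d2 := (key v' hv'2).choose_spec.2
      rw [← h1] at d2
      rw [h2] at d1
      omega
  have hmaps : ∀ v ∈ (Finset.univ.erase u), F v ∈ H.edgeFinset := by
    intro v hv
    have hv2 : v ≠ u := (Finset.mem_erase.1 hv).1
    rw [hF]
    simp only [dif_pos hv2]
    rw [SimpleGraph.mem_edgeFinset, SimpleGraph.mem_edgeSet]
    exact (key v hv2).choose_spec.1
  have := Finset.card_le_card_of_injOn F hmaps hinj
  rw [Finset.card_erase_of_mem (Finset.mem_univ u)] at this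
  have : Fintype.card V - 1 ≤ H.edgeFinset.card := by
    simpa [Finset.card_univ] using this
  have hne : Nonempty V := ⟨u⟩
  have hpos : 1 ≤ Fintype.card V := Fintype.card_pos
  omega



section Component

variable [Fintype V] (H : SimpleGraph V) (u : V)

/-- The vertex set of the connected component of `u`. -/
def comp : Set V := {w | H.Reachable u w}

lemma comp_closed {w z : V} (hw : w ∈ comp H u) (h : H.Adj w z) : z ∈ comp H u :=
  hw.trans h.reachable

lemma reach_induce : ∀ {a b : V} (_ : H.Walk a b) (ha : a ∈ comp H u) (hb : b ∈ comp H u),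
    (H.induce (comp H u)).Reachable ⟨a, ha⟩ ⟨b, hb⟩ := by
  intro a b p
  induction p with
  | nil =>
    intro ha hb
    exact SimpleGraph.Reachable.refl _
  | @cons a w b h p ih =>
    intro ha hb
    have hw : w ∈ comp H u := comp_closed H u ha h
    have hadj : (H.induce (comp H u)).Adj ⟨a, ha⟩ ⟨w, hw⟩ := h
    exact hadj.reachable.trans (ih hw hb)

lemma comp_connected : (H.induce (comp H u)).Connected := by
  rw [SimpleGraph.connected_iff]
  constructor
  · rintro ⟨a, ha⟩ ⟨b, hb⟩
    have hr : H.Reachable a b := ha.symm.trans hb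
    exact hr.elim fun p => reach_induce H u p ha hb
  · exact ⟨⟨u, SimpleGraph.Reachable.refl u⟩⟩

lemma comp_degree (a : ↥(comp H u)) : (H.induce (comp H u)).degree a = H.degree (a : V) := by
  unfold SimpleGraph.degree
  refine Finset.card_nbij (fun x => (x : V)) ?_ ?_ ?_
  · intro x hx
    simp only [Finset.mem_coe, SimpleGraph.mem_neighborFinset] at hx ⊢
    exact hx
  · intro x _ y _ hxy
    exact Subtype.ext hxy
  · intro z hz
    simp only [SimpleGraph.mem_neighborFinset, Finset.mem_coe] at hz
    have hadj : H.Adj (a : V) z := hz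
    have hzc : z ∈ comp H u := comp_closed H u a.2 hadj
    refine ⟨⟨z, hzc⟩, ?_, rfl⟩
    simp only [SimpleGraph.mem_neighborFinset, Finset.mem_coe]
    exact hadj

end Component


/-- In a graph of max degree ≤ 2, a connected component cannot contain three
distinct vertices of degree ≤ 1. -/
lemma not_three_lowdeg [Fintype V] (H : SimpleGraph V)
    (hdeg : ∀ v, H.degree v ≤ 2) {a b c : V}
    (hab : a ≠ b) (hac : a ≠ c) (hbc : b ≠ c)
    (hda : H.degree a ≤ 1) (hdb : H.degree b ≤ 1) (hdc : H.degree c ≤ 1)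
    (hrb : H.Reachable a b) (hrc : H.Reachable a c) : False := by
  set S := comp H a with hS
  have haS : a ∈ S := SimpleGraph.Reachable.refl a
  have hbS : b ∈ S := hrb
  have hcS : c ∈ S := hrc
  set Hs := H.induce S with hHs
  have h1 : Fintype.card ↥S ≤ Hs.edgeFinset.card + 1 :=
    card_le_card_edgeFinset_add_one Hs (comp_connected H a)
  have h2 : ∑ v : ↥S, Hs.degree v = 2 * Hs.edgeFinset.card :=
    SimpleGraph.sum_degrees_eq_twice_card_edges Hs
  set a' : ↥S := ⟨a, haS⟩
  set b' : ↥S := ⟨b, hbS⟩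
  set c' : ↥S := ⟨c, hcS⟩
  have hab' : a' ≠ b' := fun h => hab (congrArg Subtype.val h)
  have hac' : a' ≠ c' := fun h => hac (congrArg Subtype.val h)
  have hbc' : b' ≠ c' := fun h => hbc (congrArg Subtype.val h)
  set T : Finset ↥S := {a', b', c'} with hT
  have hTcard : T.card = 3 := by
    rw [hT]
    rw [Finset.card_insert_of_notMem (by simp [hab', hac']),
        Finset.card_insert_of_notMem (by simp [hbc']), Finset.card_singleton]
  have hTsub : T ⊆ Finset.univ := Finset.subset_univ T
  have hsplit : ∑ v ∈ Finset.univ \ T, Hs.degree v + ∑ v ∈ T, Hs.degree v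
      = ∑ v : ↥S, Hs.degree v := Finset.sum_sdiff hTsub
  have hdegs : ∀ v : ↥S, Hs.degree v = H.degree (v : V) := comp_degree H a
  have hTsum : ∑ v ∈ T, Hs.degree v ≤ 3 := by
    rw [hT, Finset.sum_insert (by simp [hab', hac']),
        Finset.sum_insert (by simp [hbc']), Finset.sum_singleton]
    rw [hdegs a', hdegs b', hdegs c']
    have e1 : H.degree (a' : V) = H.degree a := rfl
    have e2 : H.degree (b' : V) = H.degree b := rfl
    have e3 : H.degree (c' : V) = H.degree c := rfl
    omega
  have hrest : ∑ v ∈ Finset.univ \ T, Hs.degree v ≤ 2 * (Finset.univ \ T).card := by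
    rw [mul_comm]
    apply Finset.sum_le_card_nsmul
    intro x _
    rw [hdegs x]
    exact hdeg _
  have hcardT : (Finset.univ \ T).card = Fintype.card ↥S - 3 := by
    rw [Finset.card_sdiff_of_subset hTsub, hTcard, Finset.card_univ]
  have hcard3 : 3 ≤ Fintype.card ↥S := by
    calc 3 = T.card := hTcard.symm
    _ ≤ Finset.univ.card := Finset.card_le_card hTsub
    _ = Fintype.card ↥S := Finset.card_univ
  omega

/-- A finite acyclic graph with an edge has a leaf. -/
lemma exists_leaf [Fintype V] (H : SimpleGraph V) (hA : H.IsAcyclic)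
    {x₀ y₀ : V} (h₀ : H.Adj x₀ y₀) :
    ∃ y x, H.Adj y x ∧ ∀ z, H.Adj y z → z = x := by
  by_contra hno
  push_neg at hno
  have hdeg2 : ∀ v w, H.Adj v w → 2 ≤ H.degree v := by
    intro v w hvw
    obtain ⟨z, hz, hzw⟩ := hno v w hvw
    have hsub : {w, z} ⊆ H.neighborFinset v := by
      intro q hq
      rcases Finset.mem_insert.1 hq with h | h
      · subst h; exact (SimpleGraph.mem_neighborFinset H v q).2 hvw
      · rw [Finset.mem_singleton] at h; subst h
        exact (SimpleGraph.mem_neighborFinset H v q).2 hz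
    calc 2 = ({w, z} : Finset V).card := (Finset.card_pair (fun h => hzw h.symm)).symm
      _ ≤ (H.neighborFinset v).card := Finset.card_le_card hsub
  set S := comp H x₀ with hS
  have hconn := comp_connected H x₀
  have hacy : (H.induce S).IsAcyclic :=
    acyclic_of_injective_hom (SimpleGraph.Embedding.induce (G := H) S).toHom
      (SimpleGraph.Embedding.induce (G := H) S).injective hA
  have htree : (H.induce S).IsTree := ⟨hconn, hacy⟩
  have hcard := htree.card_edgeFinset
  have h2 := SimpleGraph.sum_degrees_eq_twice_card_edges (H.induce S)
  have hmin : ∀ v : ↥S, 2 ≤ (H.induce S).degree v := by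
    intro v
    rw [comp_degree]
    rcases eq_or_ne (v : V) x₀ with h | h
    · rw [h]; exact hdeg2 x₀ y₀ h₀
    · have hr : H.Reachable (v : V) x₀ := (v.2 : H.Reachable x₀ v).symm
      obtain ⟨p⟩ := hr
      obtain ⟨w, hadj, q, hq⟩ := SimpleGraph.Walk.exists_eq_cons_of_ne h p
      exact hdeg2 _ w hadj
  have hsum : 2 * Fintype.card ↥S ≤ ∑ v : ↥S, (H.induce S).degree v := by
    rw [← Finset.card_univ, mul_comm]
    exact Finset.card_nsmul_le_sum Finset.univ _ 2 (fun x _ => hmin x)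
  omega



/-- `c` is a color in `{1,…,t}` not appearing at `v`. -/
def MissingAt (G : SimpleGraph V) (t : ℕ) (f : Sym2 V → ℕ) (v : V) (c : ℕ) : Prop :=
  c ∈ Finset.Icc 1 t ∧ c ∉ colorsAt G f v

lemma mem_colorsAt {G : SimpleGraph V} {f : Sym2 V → ℕ} {v : V} {c : ℕ} :
    c ∈ colorsAt G f v ↔ ∃ w, G.Adj v w ∧ f s(v, w) = c := by
  constructor
  · rintro ⟨e, he, hv, hf⟩
    obtain ⟨w, rfl⟩ := Sym2.mem_iff_exists.1 hv
    exact ⟨w, (SimpleGraph.mem_edgeSet G).1 he, hf⟩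
  · rintro ⟨w, hw, hf⟩
    exact ⟨s(v, w), (SimpleGraph.mem_edgeSet G).2 hw, Sym2.mem_mk_left v w, hf⟩

lemma exists_missingAt [Fintype V] {G : SimpleGraph V} {t : ℕ} (f : Sym2 V → ℕ) {v : V}
    (h : G.degree v < t) : ∃ c, MissingAt G t f v c := by
  have hcard : ((G.incidenceFinset v).image f).card < (Finset.Icc 1 t).card := by
    have h1 : ((G.incidenceFinset v).image f).card ≤ (G.incidenceFinset v).card :=
      Finset.card_image_le
    have h2 : (G.incidenceFinset v).card = G.degree v := G.card_incidenceFinset_eq_degree v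
    have h3 : (Finset.Icc 1 t).card = t := by rw [Nat.card_Icc]; omega
    omega
  have hns : ¬ (Finset.Icc 1 t ⊆ (G.incidenceFinset v).image f) := fun hsub =>
    absurd (Finset.card_le_card hsub) (by omega)
  obtain ⟨c, hc1, hc2⟩ := Finset.not_subset.1 hns
  refine ⟨c, hc1, ?_⟩
  rintro ⟨e, he, hv, hf⟩
  exact hc2 (Finset.mem_image.2 ⟨e, (G.mem_incidenceFinset v e).2 ⟨he, hv⟩, hf⟩)

lemma swapCol_invol (a b c : ℕ) : swapCol a b (swapCol a b c) = c := by
  unfold swapCol; split_ifs <;> omega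

lemma swapCol_inj (a b : ℕ) : Function.Injective (swapCol a b) := by
  intro c d h
  have := congrArg (swapCol a b) h
  rwa [swapCol_invol, swapCol_invol] at this

lemma swapCol_mem_Icc {t a b : ℕ} (ha : a ∈ Finset.Icc 1 t) (hb : b ∈ Finset.Icc 1 t)
    {c : ℕ} (hc : c ∈ Finset.Icc 1 t) : swapCol a b c ∈ Finset.Icc 1 t := by
  unfold swapCol; split_ifs <;> assumption

lemma swapCol_eq_self {a b c : ℕ} (h1 : c ≠ a) (h2 : c ≠ b) : swapCol a b c = c := by
  simp [swapCol, h1, h2]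

lemma swapCol_left (a b : ℕ) : swapCol a b a = b := by simp [swapCol]

lemma swapCol_right (a b : ℕ) : swapCol a b b = a := by
  unfold swapCol; split_ifs <;> omega

lemma eq_of_swapCol_eq {a b c d : ℕ} (h : swapCol a b c = d) (h1 : d ≠ a) (h2 : d ≠ b) :
    c = d := by
  by_cases hc1 : c = a
  · rw [hc1, swapCol_left] at h; exact (h2 h.symm).elim
  · by_cases hc2 : c = b
    · rw [hc2, swapCol_right] at h; exact (h1 h.symm).elim
    · rwa [swapCol_eq_self hc1 hc2] at h

lemma twoColorSub_adj {G : SimpleGraph V} {f : Sym2 V → ℕ} {a b : ℕ} {u w : V} :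
    (twoColorSub G f a b).Adj u w ↔ s(u, w) ∈ G.edgeSet ∧ (f s(u, w) = a ∨ f s(u, w) = b) := by
  rw [twoColorSub, SimpleGraph.fromEdgeSet_adj]
  constructor
  · rintro ⟨h, _⟩; exact h
  · intro h
    exact ⟨h, ((SimpleGraph.mem_edgeSet G).1 h.1).ne⟩

lemma twoColorSub_comm (G : SimpleGraph V) (f : Sym2 V → ℕ) (a b : ℕ) :
    twoColorSub G f a b = twoColorSub G f b a := by
  unfold twoColorSub
  congr 1
  ext e
  exact and_congr_right (fun _ => or_comm)

lemma twoColorSub_degree_le_two [Fintype V] {G : SimpleGraph V} {t : ℕ} {f : Sym2 V → ℕ}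
    (hf : IsProperEdgeColoring G t f) (a b : ℕ) (v : V) :
    (twoColorSub G f a b).degree v ≤ 2 := by
  have hmap : ∀ w ∈ (twoColorSub G f a b).neighborFinset v,
      f s(v, w) ∈ ({a, b} : Finset ℕ) := by
    intro w hw
    rw [SimpleGraph.mem_neighborFinset] at hw
    rcases (twoColorSub_adj.1 hw).2 with h | h <;> simp [h]
  have hinj : Set.InjOn (fun w => f s(v, w)) ↑((twoColorSub G f a b).neighborFinset v) := by
    intro w₁ hw₁ w₂ hw₂ heq
    simp only [Finset.mem_coe, SimpleGraph.mem_neighborFinset] at hw₁ hw₂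
    by_contra hne
    have he₁ : s(v, w₁) ∈ G.edgeSet := (twoColorSub_adj.1 hw₁).1
    have he₂ : s(v, w₂) ∈ G.edgeSet := (twoColorSub_adj.1 hw₂).1
    have hedne : s(v, w₁) ≠ s(v, w₂) := by
      intro h
      rcases Sym2.eq_iff.1 h with ⟨_, h2⟩ | ⟨_, h2⟩
      · exact hne h2
      · exact ((SimpleGraph.mem_edgeSet G).1 he₁).ne h2.symm
    exact hf.2 _ he₁ _ he₂ hedne ⟨v, Sym2.mem_mk_left v w₁, Sym2.mem_mk_left v w₂⟩ heq
  calc (twoColorSub G f a b).degree v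
      = ((twoColorSub G f a b).neighborFinset v).card := rfl
    _ ≤ ({a, b} : Finset ℕ).card := Finset.card_le_card_of_injOn _ hmap hinj
    _ ≤ 2 := Finset.card_insert_le a {b} |>.trans (by simp)

lemma twoColorSub_degree_le_one [Fintype V] {G : SimpleGraph V} {t : ℕ} {f : Sym2 V → ℕ}
    (hf : IsProperEdgeColoring G t f) {a : ℕ} (b : ℕ) {v : V}
    (hmiss : a ∉ colorsAt G f v) :
    (twoColorSub G f a b).degree v ≤ 1 := by
  have hmap : ∀ w ∈ (twoColorSub G f a b).neighborFinset v,
      f s(v, w) ∈ ({b} : Finset ℕ) := by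
    intro w hw
    rw [SimpleGraph.mem_neighborFinset] at hw
    have hadj := twoColorSub_adj.1 hw
    rcases hadj.2 with h | h
    · exact absurd (mem_colorsAt.2 ⟨w, (SimpleGraph.mem_edgeSet G).1 hadj.1, h⟩) hmiss
    · simp [h]
  have hinj : Set.InjOn (fun w => f s(v, w)) ↑((twoColorSub G f a b).neighborFinset v) := by
    intro w₁ hw₁ w₂ hw₂ heq
    simp only [Finset.mem_coe, SimpleGraph.mem_neighborFinset] at hw₁ hw₂
    by_contra hne
    have he₁ : s(v, w₁) ∈ G.edgeSet := (twoColorSub_adj.1 hw₁).1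
    have he₂ : s(v, w₂) ∈ G.edgeSet := (twoColorSub_adj.1 hw₂).1
    have hedne : s(v, w₁) ≠ s(v, w₂) := by
      intro h
      rcases Sym2.eq_iff.1 h with ⟨_, h2⟩ | ⟨_, h2⟩
      · exact hne h2
      · exact ((SimpleGraph.mem_edgeSet G).1 he₁).ne h2.symm
    exact hf.2 _ he₁ _ he₂ hedne ⟨v, Sym2.mem_mk_left v w₁, Sym2.mem_mk_left v w₂⟩ heq
  calc (twoColorSub G f a b).degree v
      = ((twoColorSub G f a b).neighborFinset v).card := rfl
    _ ≤ ({b} : Finset ℕ).card := Finset.card_le_card_of_injOn _ hmap hinj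
    _ = 1 := Finset.card_singleton b

section Interchange

variable {G : SimpleGraph V} {f : Sym2 V → ℕ} {a b : ℕ} {v : V}

lemma interchange_eq_of_reach {u : V} {e : Sym2 V}
    (hu : (twoColorSub G f a b).Reachable v u) (he : e ∈ G.edgeSet) (hue : u ∈ e) :
    interchange G f a b v e = swapCol a b (f e) := by
  by_cases hab : f e = a ∨ f e = b
  · obtain ⟨w, rfl⟩ := Sym2.mem_iff_exists.1 hue
    have hadj : (twoColorSub G f a b).Adj u w := twoColorSub_adj.2 ⟨he, hab⟩
    have hw : (twoColorSub G f a b).Reachable v w := hu.trans hadj.reachable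
    have hcond : ∀ x ∈ s(u, w), (twoColorSub G f a b).Reachable v x := by
      intro x hx
      rcases Sym2.mem_iff.1 hx with h | h
      · exact h ▸ hu
      · exact h ▸ hw
    rw [interchange, if_pos hcond]
  · push_neg at hab
    have : swapCol a b (f e) = f e := swapCol_eq_self hab.1 hab.2
    rw [interchange]
    split_ifs <;> rw [this]

lemma interchange_eq_of_not_reach {u : V} {e : Sym2 V}
    (hu : ¬ (twoColorSub G f a b).Reachable v u) (hue : u ∈ e) :
    interchange G f a b v e = f e := by
  rw [interchange, if_neg]
  intro hcond
  exact hu (hcond u hue)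

lemma interchange_cases (e : Sym2 V) :
    interchange G f a b v e = f e ∨ interchange G f a b v e = swapCol a b (f e) := by
  rw [interchange]
  split_ifs
  · exact Or.inr rfl
  · exact Or.inl rfl

lemma interchange_proper {t : ℕ} (hf : IsProperEdgeColoring G t f)
    (ha : a ∈ Finset.Icc 1 t) (hb : b ∈ Finset.Icc 1 t) :
    IsProperEdgeColoring G t (interchange G f a b v) := by
  constructor
  · intro e he
    rcases interchange_cases (G := G) (f := f) (a := a) (b := b) (v := v) e with h | h
    · rw [h]; exact hf.1 e he
    · rw [h]; exact swapCol_mem_Icc ha hb (hf.1 e he)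
  · intro e₁ he₁ e₂ he₂ hne hshare
    have mixed : ∀ d₁ d₂ : Sym2 V, d₁ ∈ G.edgeSet → d₂ ∈ G.edgeSet → d₁ ≠ d₂ →
        (∃ w, w ∈ d₁ ∧ w ∈ d₂) →
        (∀ x ∈ d₁, (twoColorSub G f a b).Reachable v x) →
        ¬ (∀ x ∈ d₂, (twoColorSub G f a b).Reachable v x) →
        swapCol a b (f d₁) ≠ f d₂ := by
      intro d₁ d₂ hd₁ hd₂ hdne ⟨w, hw₁, hw₂⟩ hC₁ hC₂ heq
      by_cases hab : f d₂ = a ∨ f d₂ = b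
      · obtain ⟨w', rfl⟩ := Sym2.mem_iff_exists.1 hw₂
        have hadj : (twoColorSub G f a b).Adj w w' := twoColorSub_adj.2 ⟨hd₂, hab⟩
        have hrw : (twoColorSub G f a b).Reachable v w := hC₁ w hw₁
        have hrw' := hrw.trans hadj.reachable
        apply hC₂
        intro x hx
        rcases Sym2.mem_iff.1 hx with h | h
        · exact h ▸ hrw
        · exact h ▸ hrw'
      · push_neg at hab
        have : f d₁ = f d₂ := eq_of_swapCol_eq heq hab.1 hab.2
        exact hf.2 d₁ hd₁ d₂ hd₂ hdne ⟨w, hw₁, hw₂⟩ this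
    by_cases hC₁ : ∀ x ∈ e₁, (twoColorSub G f a b).Reachable v x <;>
      by_cases hC₂ : ∀ x ∈ e₂, (twoColorSub G f a b).Reachable v x
    · rw [interchange, if_pos hC₁, interchange, if_pos hC₂]
      intro h
      exact hf.2 e₁ he₁ e₂ he₂ hne hshare (swapCol_inj a b h)
    · rw [interchange, if_pos hC₁, interchange, if_neg hC₂]
      exact mixed e₁ e₂ he₁ he₂ hne hshare hC₁ hC₂
    · rw [interchange, if_neg hC₁, interchange, if_pos hC₂]
      intro h
      obtain ⟨w, hw₁, hw₂⟩ := hshare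
      exact mixed e₂ e₁ he₂ he₁ (Ne.symm hne) ⟨w, hw₂, hw₁⟩ hC₂ hC₁ h.symm
    · rw [interchange, if_neg hC₁, interchange, if_neg hC₂]
      exact hf.2 e₁ he₁ e₂ he₂ hne hshare
  
lemma colorsAt_interchange_of_reach {u : V} {c : ℕ}
    (hu : (twoColorSub G f a b).Reachable v u) :
    c ∈ colorsAt G (interchange G f a b v) u ↔ swapCol a b c ∈ colorsAt G f u := by
  constructor
  · rintro ⟨e, he, hue, hfe⟩
    refine ⟨e, he, hue, ?_⟩
    rw [← hfe, interchange_eq_of_reach hu he hue, swapCol_invol]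
  · rintro ⟨e, he, hue, hfe⟩
    refine ⟨e, he, hue, ?_⟩
    rw [interchange_eq_of_reach hu he hue]
    have h2 := congrArg (swapCol a b) hfe
    rwa [swapCol_invol] at h2

lemma colorsAt_interchange_of_not_reach {u : V}
    (hu : ¬ (twoColorSub G f a b).Reachable v u) :
    colorsAt G (interchange G f a b v) u = colorsAt G f u := by
  ext c
  constructor
  · rintro ⟨e, he, hue, hfe⟩
    exact ⟨e, he, hue, by rw [← hfe, interchange_eq_of_not_reach hu hue]⟩
  · rintro ⟨e, he, hue, hfe⟩
    exact ⟨e, he, hue, by rw [interchange_eq_of_not_reach hu hue, hfe]⟩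

lemma missingAt_interchange_of_reach {t : ℕ} {u : V} {c : ℕ}
    (ha : a ∈ Finset.Icc 1 t) (hb : b ∈ Finset.Icc 1 t)
    (hu : (twoColorSub G f a b).Reachable v u) :
    MissingAt G t (interchange G f a b v) u c ↔ MissingAt G t f u (swapCol a b c) := by
  unfold MissingAt
  rw [colorsAt_interchange_of_reach hu]
  constructor
  · rintro ⟨h1, h2⟩
    exact ⟨swapCol_mem_Icc ha hb h1, h2⟩
  · rintro ⟨h1, h2⟩
    refine ⟨?_, h2⟩
    have := swapCol_mem_Icc ha hb h1
    rwa [swapCol_invol] at this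

lemma missingAt_interchange_of_not_reach {t : ℕ} {u : V} {c : ℕ}
    (hu : ¬ (twoColorSub G f a b).Reachable v u) :
    MissingAt G t (interchange G f a b v) u c ↔ MissingAt G t f u c := by
  unfold MissingAt
  rw [colorsAt_interchange_of_not_reach hu]

end Interchange

section Rotation

variable [Fintype V]

/-- Recoloring a "fan" at `x`: shift the colors along the fan and use the final
missing color on the last edge. -/
lemma rotation (G : SimpleGraph V) (t : ℕ) (x y : V) (hxy : G.Adj x y)
    (g : Sym2 V → ℕ) (hg : IsProperEdgeColoring (G.deleteEdges {s(x,y)}) t g)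
    (m : ℕ) (z : ℕ → V) (d : ℕ → ℕ)
    (hz0 : z 0 = y)
    (hadj : ∀ i ≤ m, G.Adj x (z i))
    (hzinj : ∀ i ≤ m, ∀ j ≤ m, z i = z j → i = j)
    (hmiss : ∀ i ≤ m, MissingAt (G.deleteEdges {s(x,y)}) t g (z i) (d i))
    (hcol : ∀ i < m, g s(x, z (i+1)) = d i)
    (hlast : MissingAt (G.deleteEdges {s(x,y)}) t g x (d m)) :
    ∃ h, IsProperEdgeColoring G t h := by
  set G' := G.deleteEdges {s(x,y)} with hG'
  have hxz : ∀ i ≤ m, x ≠ z i := fun i hi => (hadj i hi).ne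
  have hedge_mem : ∀ i ≤ m, s(x, z i) ∈ G.edgeSet := fun i hi =>
    (SimpleGraph.mem_edgeSet G).2 (hadj i hi)
  have hG'mem : ∀ i, 1 ≤ i → i ≤ m → s(x, z i) ∈ G'.edgeSet := by
    intro i h1 hi
    rw [hG', SimpleGraph.edgeSet_deleteEdges]
    refine ⟨hedge_mem i hi, ?_⟩
    simp only [Set.mem_singleton_iff]
    intro h
    rcases Sym2.eq_iff.1 h with ⟨_, h2⟩ | ⟨_, h2⟩
    · have : i = 0 := hzinj i hi 0 (Nat.zero_le m) (h2.trans hz0.symm)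
      omega
    · exact hxz i hi h2.symm
  have hG'adj : ∀ i, 1 ≤ i → i ≤ m → G'.Adj x (z i) := fun i h1 hi =>
    (SimpleGraph.mem_edgeSet G').1 (hG'mem i h1 hi)
  have hd_colors : ∀ i < m, d i ∈ colorsAt G' g x := by
    intro i hi
    exact mem_colorsAt.2 ⟨z (i+1), hG'adj (i+1) (by omega) (by omega), hcol i hi⟩
  have dinj : ∀ i ≤ m, ∀ j ≤ m, d i = d j → i = j := by
    intro i hi j hj heq
    rcases eq_or_lt_of_le hi with him | him <;> rcases eq_or_lt_of_le hj with hjm | hjm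
    · omega
    · exact ((him ▸ hlast.2) (heq ▸ hd_colors j hjm)).elim
    · exact ((hjm ▸ hlast.2) (heq ▸ hd_colors i him)).elim
    · by_contra hne
      have hzne : s(x, z (i+1)) ≠ s(x, z (j+1)) := by
        intro h
        rcases Sym2.eq_iff.1 h with ⟨_, h2⟩ | ⟨_, h2⟩
        · exact hne (by have := hzinj (i+1) (by omega) (j+1) (by omega) h2; omega)
        · exact hxz (i+1) (by omega) h2.symm
      exact hg.2 _ (hG'mem (i+1) (by omega) (by omega)) _ (hG'mem (j+1) (by omega) (by omega))
        hzne ⟨x, Sym2.mem_mk_left _ _, Sym2.mem_mk_left _ _⟩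
        (by rw [hcol i him, hcol j hjm]; exact heq)
  set P : Sym2 V → Prop := fun e => ∃ i, i ≤ m ∧ e = s(x, z i) with hP
  set h : Sym2 V → ℕ := fun e => if hp : P e then d (Nat.find hp) else g e with hh
  have h_spec : ∀ i ≤ m, h s(x, z i) = d i := by
    intro i hi
    have hp : P s(x, z i) := ⟨i, hi, rfl⟩
    rw [hh]
    simp only [dif_pos hp]
    obtain ⟨hj1, hj2⟩ := Nat.find_spec hp
    congr 1
    rcases Sym2.eq_iff.1 hj2 with ⟨_, h2⟩ | ⟨h1, _⟩
    · exact (hzinj _ hj1 _ hi h2.symm)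
    · exact ((hxz _ hj1) h1).elim
  have h_off : ∀ e, ¬ P e → h e = g e := by
    intro e hp
    rw [hh]; simp only [dif_neg hp]
  have hG'mem_off : ∀ e, e ∈ G.edgeSet → ¬ P e → e ∈ G'.edgeSet := by
    intro e he hp
    rw [hG', SimpleGraph.edgeSet_deleteEdges]
    refine ⟨he, ?_⟩
    simp only [Set.mem_singleton_iff]
    intro hexy
    exact hp ⟨0, Nat.zero_le m, by rw [hexy, hz0]⟩
  have key : ∀ e₂, e₂ ∈ G.edgeSet → ¬ P e₂ → ∀ i ≤ m,
      (∃ w, w ∈ s(x, z i) ∧ w ∈ e₂) → d i ≠ g e₂ := by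
    intro e₂ he₂ hp₂ i hi hshare heq
    have he₂' : e₂ ∈ G'.edgeSet := hG'mem_off e₂ he₂ hp₂
    by_cases hx2 : x ∈ e₂
    · have hcolor : g e₂ ∈ colorsAt G' g x := ⟨e₂, he₂', hx2, rfl⟩
      rcases eq_or_lt_of_le hi with him | him
      · exact (him ▸ hlast.2) (heq ▸ hcolor)
      · have hne : s(x, z (i+1)) ≠ e₂ := fun h => hp₂ ⟨i+1, by omega, h.symm⟩
        exact hg.2 _ (hG'mem (i+1) (by omega) (by omega)) _ he₂' hne
          ⟨x, Sym2.mem_mk_left _ _, hx2⟩ (by rw [hcol i him]; exact heq)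
    · obtain ⟨w, hw1, hw2⟩ := hshare
      have hwz : w = z i := by
        rcases Sym2.mem_iff.1 hw1 with h | h
        · exact absurd (h ▸ hw2) hx2
        · exact h
      have hcolor : g e₂ ∈ colorsAt G' g (z i) := ⟨e₂, he₂', hwz ▸ hw2, rfl⟩
      exact (hmiss i hi).2 (heq ▸ hcolor)
  refine ⟨h, ?_, ?_⟩
  · intro e he
    by_cases hp : P e
    · rw [hh]; simp only [dif_pos hp]
      exact (hmiss _ (Nat.find_spec hp).1).1
    · rw [h_off e hp]
      exact hg.1 e (hG'mem_off e he hp)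
  · intro e₁ he₁ e₂ he₂ hne hshare
    by_cases hp₁ : P e₁ <;> by_cases hp₂ : P e₂
    · obtain ⟨hi1, hi2⟩ := Nat.find_spec hp₁
      obtain ⟨hj1, hj2⟩ := Nat.find_spec hp₂
      rw [hi2, hj2, h_spec _ hi1, h_spec _ hj1]
      intro heq
      have := dinj _ hi1 _ hj1 heq
      exact hne (by rw [hi2, hj2, this])
    · obtain ⟨hi1, hi2⟩ := Nat.find_spec hp₁
      rw [hi2, h_spec _ hi1, h_off e₂ hp₂]
      exact key e₂ he₂ hp₂ _ hi1 (hi2 ▸ hshare)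
    · obtain ⟨hj1, hj2⟩ := Nat.find_spec hp₂
      rw [hj2, h_spec _ hj1, h_off e₁ hp₁]
      obtain ⟨w, hw1, hw2⟩ := hshare
      exact fun heq => key e₁ he₁ hp₁ _ hj1 (hj2 ▸ ⟨w, hw2, hw1⟩) heq.symm
    · rw [h_off e₁ hp₁, h_off e₂ hp₂]
      exact hg.2 e₁ (hG'mem_off e₁ he₁ hp₁) e₂ (hG'mem_off e₂ he₂ hp₂) hne hshare

end Rotation

section Extend

variable [Fintype V]

lemma degree_le_of_le {G₁ G₂ : SimpleGraph V} (h : G₁ ≤ G₂) (v : V) :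
    G₁.degree v ≤ G₂.degree v := by
  unfold SimpleGraph.degree
  apply Finset.card_le_card
  intro w hw
  rw [SimpleGraph.mem_neighborFinset] at hw ⊢
  exact h hw

lemma deleteEdges_degree_left {G : SimpleGraph V} {x y : V} (hxy : G.Adj x y) :
    (G.deleteEdges {s(x,y)}).degree x + 1 = G.degree x := by
  have hnb : (G.deleteEdges {s(x,y)}).neighborFinset x = (G.neighborFinset x).erase y := by
    ext w
    rw [SimpleGraph.mem_neighborFinset, Finset.mem_erase, SimpleGraph.mem_neighborFinset,
      SimpleGraph.deleteEdges_adj]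
    constructor
    · rintro ⟨h1, h2⟩
      refine ⟨?_, h1⟩
      intro hh
      exact h2 (by rw [hh]; exact Set.mem_singleton _)
    · rintro ⟨h1, h2⟩
      refine ⟨h2, ?_⟩
      simp only [Set.mem_singleton_iff]
      intro hh
      rcases Sym2.eq_iff.1 hh with ⟨_, h3⟩ | ⟨h3, _⟩
      · exact h1 h3
      · exact hxy.ne h3
  unfold SimpleGraph.degree
  rw [hnb, Finset.card_erase_of_mem ((SimpleGraph.mem_neighborFinset G x y).2 hxy)]
  have : 0 < (G.neighborFinset x).card :=
    Finset.card_pos.2 ⟨y, (SimpleGraph.mem_neighborFinset G x y).2 hxy⟩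
  omega

lemma deleteEdges_degree_right {G : SimpleGraph V} {x y : V} (hxy : G.Adj x y) :
    (G.deleteEdges {s(x,y)}).degree y + 1 = G.degree y := by
  have h := deleteEdges_degree_left (G := G) hxy.symm
  rwa [Sym2.eq_swap (a := y) (b := x)] at h

/-- The Vizing fan extension: if the edge `xy` is uncolored, every other neighbor
of `x` has degree `< t`, and `deg x, deg y ≤ t`, then a proper `t`-coloring of
`G - xy` extends to one of `G`. -/
lemma extend (G : SimpleGraph V) (t : ℕ) (x y : V) (hxy : G.Adj x y)
    (hdegx : G.degree x ≤ t) (hdegy : G.degree y ≤ t)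
    (hnb : ∀ z, G.Adj x z → z ≠ y → G.degree z < t)
    (f : Sym2 V → ℕ) (hf : IsProperEdgeColoring (G.deleteEdges {s(x,y)}) t f) :
    ∃ h, IsProperEdgeColoring G t h := by
  set G' := G.deleteEdges {s(x,y)} with hG'
  have hle : G' ≤ G := SimpleGraph.deleteEdges_le _
  have hdx' : G'.degree x < t := by
    have h := deleteEdges_degree_left hxy
    change G'.degree x + 1 = G.degree x at h
    omega
  have hdy' : G'.degree y < t := by
    have h := deleteEdges_degree_right hxy
    change G'.degree y + 1 = G.degree y at h
    omega
  have hmissN : ∀ z, G.Adj x z → ∃ c, MissingAt G' t f z c := by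
    intro z hz
    by_cases hzy : z = y
    · subst hzy; exact exists_missingAt f (by convert hdy')
    · have h1 : G'.degree z < t := lt_of_le_of_lt (show G'.degree z ≤ G.degree z by convert degree_le_of_le hle z) (hnb z hz hzy)
      exact exists_missingAt f (by convert h1)
  obtain ⟨α, hα⟩ := exists_missingAt (G := G') f (by convert hdx')
  -- fans
  set IsFan : (ℕ → V) → (ℕ → ℕ) → ℕ → Prop := fun z d m =>
    z 0 = y ∧ (∀ i ≤ m, G.Adj x (z i)) ∧ (∀ i ≤ m, ∀ j ≤ m, z i = z j → i = j) ∧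
    (∀ i ≤ m, MissingAt G' t f (z i) (d i)) ∧ (∀ i < m, f s(x, z (i+1)) = d i) with hIsFan
  have hfan0 : ∃ z d, IsFan z d 0 := by
    obtain ⟨cy, hcy⟩ := hmissN y hxy
    refine ⟨fun _ => y, fun _ => cy, rfl, fun i _ => hxy, ?_, fun i _ => hcy, fun i hi => absurd hi (by omega)⟩
    intro i hi j hj _
    omega
  have hbound : ∀ m, (∃ z d, IsFan z d m) → m < Fintype.card V := by
    rintro m ⟨z, d, _, _, hinj, _, _⟩
    have : (Finset.range (m+1)).card ≤ (Finset.univ : Finset V).card := by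
      apply Finset.card_le_card_of_injOn z
      · intro i _; exact Finset.mem_univ _
      · intro i hi j hj hij
        simp only [Finset.coe_range, Set.mem_Iio] at hi hj
        exact hinj i (by omega) j (by omega) hij
    rw [Finset.card_range, Finset.card_univ] at this
    omega
  set m := Nat.findGreatest (fun m => ∃ z d, IsFan z d m) (Fintype.card V) with hm
  have hPm : ∃ z d, IsFan z d m := by
    rw [hm]
    exact Nat.findGreatest_spec (P := fun k => ∃ z d, IsFan z d k) (Nat.zero_le _) hfan0
  have hmax : ¬ ∃ z d, IsFan z d (m+1) := by
    intro hP
    have h1 : m + 1 ≤ Fintype.card V := le_of_lt (hbound _ hP)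
    exact Nat.findGreatest_is_greatest (hm ▸ Nat.lt_succ_self m) h1 hP
  obtain ⟨z, d, hz0, hadj, hzinj, hmiss, hcol⟩ := hPm
  have hxz : ∀ i ≤ m, x ≠ z i := fun i hi => (hadj i hi).ne
  have hG'mem : ∀ i, 1 ≤ i → i ≤ m → s(x, z i) ∈ G'.edgeSet := by
    intro i h1 hi
    rw [hG', SimpleGraph.edgeSet_deleteEdges]
    refine ⟨(SimpleGraph.mem_edgeSet G).2 (hadj i hi), ?_⟩
    simp only [Set.mem_singleton_iff]
    intro h
    rcases Sym2.eq_iff.1 h with ⟨_, h2⟩ | ⟨_, h2⟩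
    · have : i = 0 := hzinj i hi 0 (Nat.zero_le m) (h2.trans hz0.symm)
      omega
    · exact hxz i hi h2.symm
  have hd_colors : ∀ i < m, d i ∈ colorsAt G' f x := by
    intro i hi
    exact mem_colorsAt.2 ⟨z (i+1),
      (SimpleGraph.mem_edgeSet G').1 (hG'mem (i+1) (by omega) (by omega)), hcol i hi⟩
  set β := d m with hβ
  have hβIcc : β ∈ Finset.Icc 1 t := (hmiss m le_rfl).1
  by_cases hβx : β ∉ colorsAt G' f x
  · exact rotation G t x y hxy f hf m z d hz0 hadj hzinj hmiss hcol ⟨hβIcc, hβx⟩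
  -- β appears at x
  push_neg at hβx
  obtain ⟨w, hw, hfw⟩ := mem_colorsAt.1 hβx
  have hwy : w ≠ y := by
    intro h
    subst h
    rw [hG', SimpleGraph.deleteEdges_adj] at hw
    exact hw.2 rfl
  have hwfan : ∃ j, 1 ≤ j ∧ j ≤ m ∧ w = z j := by
    by_contra hcon
    push_neg at hcon
    obtain ⟨cw, hcw⟩ := hmissN w (hle hw)
    apply hmax
    refine ⟨fun i => if i ≤ m then z i else w, fun i => if i ≤ m then d i else cw,
      ?_, ?_, ?_, ?_, ?_⟩
    · simp only [if_pos (Nat.zero_le m)]; exact hz0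
    · intro i hi
      by_cases h : i ≤ m
      · simp only [if_pos h]; exact hadj i h
      · simp only [if_neg h]; exact hle hw
    · intro i hi j hj hij
      by_cases h1 : i ≤ m <;> by_cases h2 : j ≤ m
      · simp only [if_pos h1, if_pos h2] at hij; exact hzinj i h1 j h2 hij
      · simp only [if_pos h1, if_neg h2] at hij
        rcases Nat.eq_or_lt_of_le h1 with h | h
        · exact absurd hij.symm (by
            by_cases hi1 : 1 ≤ i
            · exact hcon i hi1 h1
            · have : i = 0 := by omega
              rw [this, hz0]; exact hwy)
        · exact absurd hij.symm (by
            by_cases hi1 : 1 ≤ i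
            · exact hcon i hi1 h1
            · have : i = 0 := by omega
              rw [this, hz0]; exact hwy)
      · simp only [if_neg h1, if_pos h2] at hij
        exact absurd hij (by
          by_cases hj1 : 1 ≤ j
          · exact hcon j hj1 h2
          · have : j = 0 := by omega
            rw [this, hz0]; exact hwy)
      · omega
    · intro i hi
      by_cases h : i ≤ m
      · simp only [if_pos h]; exact hmiss i h
      · simp only [if_neg h]; exact hcw
    · intro i hi
      have him : i ≤ m := by omega
      by_cases h : i + 1 ≤ m
      · simp only [if_pos h, if_pos him]; exact hcol i (by omega)
      · have : i = m := by omega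
        subst this
        simp only [if_neg h, if_pos him]
        exact hfw
  obtain ⟨j, hj1, hjm, hwj⟩ := hwfan
  set i₀ := j - 1 with hi₀def
  have hi₀ : i₀ < m := by omega
  have hi₀1 : i₀ + 1 = j := by omega
  have hdi₀ : d i₀ = β := by
    have h1 : f s(x, z (i₀+1)) = d i₀ := hcol i₀ hi₀
    rw [hi₀1, ← hwj] at h1
    rw [← h1, hfw]
  have hαβ : α ≠ β := by
    intro h
    exact hα.2 (h ▸ hβx)
  set H := twoColorSub G' f α β with hH
  have hH2 : ∀ v, H.degree v ≤ 2 := fun v => twoColorSub_degree_le_two hf α β v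
  have hHx : H.degree x ≤ 1 := twoColorSub_degree_le_one hf β hα.2
  have hHcomm : H = twoColorSub G' f β α := twoColorSub_comm G' f α β
  have hβmiss_i₀ : β ∉ colorsAt G' f (z i₀) := hdi₀ ▸ (hmiss i₀ (le_of_lt hi₀)).2
  have hβmiss_m : β ∉ colorsAt G' f (z m) := (hmiss m le_rfl).2
  have hHzi₀ : H.degree (z i₀) ≤ 1 := by
    rw [hHcomm]; exact twoColorSub_degree_le_one hf α hβmiss_i₀
  have hHzm : H.degree (z m) ≤ 1 := by
    rw [hHcomm]; exact twoColorSub_degree_le_one hf α hβmiss_m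
  have hzi₀m : z i₀ ≠ z m := by
    intro h
    have := hzinj i₀ (le_of_lt hi₀) m le_rfl h
    omega
  have hnotboth : ¬ (H.Reachable x (z i₀) ∧ H.Reachable x (z m)) := by
    rintro ⟨h1, h2⟩
    exact not_three_lowdeg H hH2 (hxz i₀ (le_of_lt hi₀)) (hxz m le_rfl) hzi₀m
      hHx hHzi₀ hHzm h1 h2
  set g := interchange G' f α β x with hg_def
  have hgproper : IsProperEdgeColoring G' t g := interchange_proper hf hα.1 hβIcc
  have hreachx : H.Reachable x x := SimpleGraph.Reachable.refl x
  have hgx : MissingAt G' t g x β := by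
    rw [hg_def, missingAt_interchange_of_reach hα.1 hβIcc hreachx, swapCol_right]
    exact hα
  have hd_ne_α : ∀ i < m, d i ≠ α := by
    intro i hi h
    exact hα.2 (h ▸ hd_colors i hi)
  have hd_ne_β : ∀ i < m, i ≠ i₀ → d i ≠ β := by
    intro i hi hne h
    have h1 : f s(x, z (i+1)) = β := (hcol i hi).trans h
    have h2 : f s(x, z (i₀+1)) = β := (hcol i₀ hi₀).trans hdi₀
    have hzne : s(x, z (i+1)) ≠ s(x, z (i₀+1)) := by
      intro hh
      rcases Sym2.eq_iff.1 hh with ⟨_, h3⟩ | ⟨_, h3⟩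
      · have := hzinj (i+1) (by omega) (i₀+1) (by omega) h3
        omega
      · exact hxz (i+1) (by omega) h3.symm
    exact hf.2 _ (hG'mem (i+1) (by omega) (by omega)) _ (hG'mem (i₀+1) (by omega) (by omega))
      hzne ⟨x, Sym2.mem_mk_left _ _, Sym2.mem_mk_left _ _⟩ (h1.trans h2.symm)
  have hg_edge : ∀ i < m, i ≠ i₀ → g s(x, z (i+1)) = d i := by
    intro i hi hne
    have hfe : f s(x, z (i+1)) = d i := hcol i hi
    rcases interchange_cases (G := G') (f := f) (a := α) (b := β) (v := x) (s(x, z (i+1))) with h | h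
    · rw [hg_def, h, hfe]
    · rw [hg_def, h, hfe, swapCol_eq_self (hd_ne_α i hi) (hd_ne_β i hi hne)]
  have hreach_zi₀1 : H.Reachable x (z (i₀+1)) := by
    have hadjH : H.Adj x (z (i₀+1)) := by
      rw [hH]
      exact twoColorSub_adj.2 ⟨hG'mem (i₀+1) (by omega) (by omega),
        Or.inr ((hcol i₀ hi₀).trans hdi₀)⟩
    exact hadjH.reachable
  have hg_i₀ : g s(x, z (i₀+1)) = α := by
    rw [hg_def, interchange_eq_of_reach hreach_zi₀1 (hG'mem (i₀+1) (by omega) (by omega))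
      (Sym2.mem_mk_right x _), (hcol i₀ hi₀).trans hdi₀, swapCol_right]
  have hmiss_g : ∀ i < m, i ≠ i₀ → MissingAt G' t g (z i) (d i) := by
    intro i hi hne
    by_cases hr : H.Reachable x (z i)
    · rw [hg_def, missingAt_interchange_of_reach hα.1 hβIcc hr,
        swapCol_eq_self (hd_ne_α i hi) (hd_ne_β i hi hne)]
      exact hmiss i (le_of_lt hi)
    · rw [hg_def, missingAt_interchange_of_not_reach hr]
      exact hmiss i (le_of_lt hi)
  by_cases hri₀ : H.Reachable x (z i₀)
  · -- swap happened on the component of x which contains z i₀; z m is not in it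
    have hrm : ¬ H.Reachable x (z m) := fun h => hnotboth ⟨hri₀, h⟩
    apply rotation G t x y hxy g hgproper m z (fun i => if i = i₀ then α else d i)
      hz0 hadj hzinj ?_ ?_ ?_
    · intro i hi
      show MissingAt G' t g (z i) (if i = i₀ then α else d i)
      by_cases h : i = i₀
      · have hite : (if i = i₀ then α else d i) = α := if_pos h
        rw [hite, hg_def, missingAt_interchange_of_reach hα.1 hβIcc
          (by rw [h]; exact hri₀), swapCol_left, h]
        exact ⟨hβIcc, hβmiss_i₀⟩
      · have hite : (if i = i₀ then α else d i) = d i := if_neg h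
        rw [hite]
        rcases Nat.eq_or_lt_of_le hi with him | him
        · rw [hg_def, missingAt_interchange_of_not_reach (by rw [him]; exact hrm)]
          exact hmiss i (le_of_eq him)
        · exact hmiss_g i him h
    · intro i hi
      show g s(x, z (i+1)) = (if i = i₀ then α else d i)
      by_cases h : i = i₀
      · have hite : (if i = i₀ then α else d i) = α := if_pos h
        rw [hite, h]
        exact hg_i₀
      · have hite : (if i = i₀ then α else d i) = d i := if_neg h
        rw [hite]
        exact hg_edge i hi h
    · show MissingAt G' t g x (if m = i₀ then α else d m)
      have hmi₀ : ¬ (m = i₀) := by omega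
      have hite : (if m = i₀ then α else d m) = d m := if_neg hmi₀
      rw [hite]
      exact hgx
  · -- z i₀ not in the component of x: rotate the prefix fan up to i₀
    apply rotation G t x y hxy g hgproper i₀ z d hz0
      (fun i hi => hadj i (by omega)) (fun i hi j hj hij => hzinj i (by omega) j (by omega) hij)
      ?_ ?_ ?_
    · intro i hi
      rcases Nat.eq_or_lt_of_le hi with h | h
      · rw [hg_def, missingAt_interchange_of_not_reach (by rw [h]; exact hri₀)]
        exact hmiss i (by omega)
      · exact hmiss_g i (by omega) (by omega)
    · intro i hi
      exact hg_edge i (by omega) (by omega)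
    · rw [hdi₀]
      exact hgx

end Extend

section Main

variable [Fintype V]

lemma exists_adj_of_nonempty {G : SimpleGraph V} (hE : G.edgeSet.Nonempty) :
    ∃ a b, G.Adj a b := by
  obtain ⟨e, he⟩ := hE
  revert he
  refine Sym2.ind (fun a b he => ?_) e
  exact ⟨a, b, (SimpleGraph.mem_edgeSet G).1 he⟩

lemma no_edges_coloring {G : SimpleGraph V} (t : ℕ) (hE : ¬ G.edgeSet.Nonempty) :
    ∃ f, IsProperEdgeColoring G t f := by
  refine ⟨fun _ => 1, ?_, ?_⟩
  · intro e he
    exact absurd ⟨e, he⟩ hE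
  · intro e₁ he₁ _ _ _ _
    exact absurd ⟨e₁, he₁⟩ hE

lemma choose_edge (G : SimpleGraph V) (t : ℕ)
    (hdeg : ∀ v, G.degree v ≤ t)
    (hac : (SimpleGraph.induce {v | G.degree v = t} G).IsAcyclic)
    (hE : G.edgeSet.Nonempty) :
    ∃ a b, G.Adj a b ∧ ∀ z, G.Adj a z → z ≠ b → G.degree z < t := by
  set D := {v | G.degree v = t} with hD
  by_cases hmax : ∃ v, G.degree v = t
  · by_cases hDedge : ∃ (p q : ↥D), (SimpleGraph.induce D G).Adj p q
    · obtain ⟨p, q, hpq⟩ := hDedge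
      obtain ⟨yD, xD, hyx, huniq⟩ := exists_leaf (SimpleGraph.induce D G) hac hpq.symm
      have hyxG : G.Adj (yD : V) (xD : V) := hyx
      refine ⟨(yD : V), (xD : V), hyxG, ?_⟩
      intro z hz hzx
      rcases lt_or_eq_of_le (hdeg z) with h | h
      · exact h
      · exfalso
        have hzD : z ∈ D := h
        have hadjD : (SimpleGraph.induce D G).Adj yD ⟨z, hzD⟩ := hz
        exact hzx (congrArg Subtype.val (huniq ⟨z, hzD⟩ hadjD))
    · obtain ⟨v, hv⟩ := hmax
      have ht1 : 1 ≤ t := by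
        obtain ⟨a, b, hab⟩ := exists_adj_of_nonempty hE
        have h1 : 0 < G.degree a := (SimpleGraph.degree_pos_iff_exists_adj G a).2 ⟨b, hab⟩
        have h2 := hdeg a
        omega
      have hdegpos : 0 < G.degree v := by omega
      obtain ⟨b, hb⟩ := (SimpleGraph.degree_pos_iff_exists_adj G v).1 hdegpos
      refine ⟨v, b, hb, ?_⟩
      intro z hz hzb
      rcases lt_or_eq_of_le (hdeg z) with h | h
      · exact h
      · exfalso
        have hzD : z ∈ D := h
        have hvD : v ∈ D := hv
        exact hDedge ⟨⟨v, hvD⟩, ⟨z, hzD⟩, hz⟩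
  · push_neg at hmax
    obtain ⟨a, b, hab⟩ := exists_adj_of_nonempty hE
    exact ⟨a, b, hab, fun z _ _ => lt_of_le_of_ne (hdeg z) (hmax z)⟩

lemma main_ind (n : ℕ) : ∀ (G : SimpleGraph V) (t : ℕ),
    G.edgeFinset.card ≤ n →
    (∀ v, G.degree v ≤ t) →
    (SimpleGraph.induce {v | G.degree v = t} G).IsAcyclic →
    ∃ f, IsProperEdgeColoring G t f := by
  induction n with
  | zero =>
    intro G t hcard _ _
    apply no_edges_coloring
    rintro ⟨e, he⟩
    have h1 : e ∈ G.edgeFinset := (SimpleGraph.mem_edgeFinset).2 he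
    have h2 : 0 < G.edgeFinset.card := Finset.card_pos.2 ⟨e, h1⟩
    omega
  | succ n ih =>
    intro G t hcard hdeg hac
    by_cases hE : G.edgeSet.Nonempty
    · obtain ⟨a, b, hab, hnb⟩ := choose_edge G t hdeg hac hE
      set G₂ := G.deleteEdges {s(a,b)} with hG₂
      have hle : G₂ ≤ G := SimpleGraph.deleteEdges_le _
      have hcard₂ : G₂.edgeFinset.card ≤ n := by
        have hsub : G₂.edgeFinset ⊆ G.edgeFinset.erase s(a,b) := by
          intro e he
          rw [SimpleGraph.mem_edgeFinset, hG₂, SimpleGraph.edgeSet_deleteEdges] at he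
          rw [Finset.mem_erase, SimpleGraph.mem_edgeFinset]
          exact ⟨fun h => he.2 (h ▸ Set.mem_singleton _), he.1⟩
        have h1 : (G.edgeFinset.erase s(a,b)).card + 1 = G.edgeFinset.card :=
          Finset.card_erase_add_one ((SimpleGraph.mem_edgeFinset).2 hab)
        have h2 := Finset.card_le_card hsub
        omega
      have hdeg₂ : ∀ v, G₂.degree v ≤ t := fun v => le_trans (show G₂.degree v ≤ G.degree v by convert degree_le_of_le hle v) (hdeg v)
      have hsubD : ∀ v, G₂.degree v = t → G.degree v = t := by
        intro v hv
        exact le_antisymm (hdeg v) (hv ▸ (show G₂.degree v ≤ G.degree v by convert degree_le_of_le hle v))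
      have hac₂ : (SimpleGraph.induce {v | G₂.degree v = t} G₂).IsAcyclic := by
        refine acyclic_of_injective_hom
          (⟨fun p => ⟨(p : V), hsubD _ p.2⟩, ?_⟩ :
            SimpleGraph.induce {v | G₂.degree v = t} G₂ →g
            SimpleGraph.induce {v | G.degree v = t} G) ?_ hac
        · intro p q hpq
          exact hle hpq
        · intro p q hpq
          have h1 : ((p : V)) = ((q : V)) := by
            have h2 := congrArg Subtype.val hpq
            exact h2
          exact Subtype.ext h1
      obtain ⟨f, hf⟩ := ih G₂ t (by convert hcard₂) (by convert hdeg₂) (by convert hac₂)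
      exact extend G t a b hab (hdeg a) (hdeg b) hnb f hf
    · exact no_edges_coloring t hE

lemma main_exists (G : SimpleGraph V) (t : ℕ)
    (hdeg : ∀ v, G.degree v ≤ t)
    (hac : (SimpleGraph.induce {v | G.degree v = t} G).IsAcyclic) :
    ∃ f, IsProperEdgeColoring G t f :=
  main_ind (G.edgeFinset.card) G t le_rfl hdeg hac

end Main

end Fournier

/-- if the subgraph induced by the vertices of maximum degree is
acyclic and `G` has an edge, then `χ'(G) = Δ(G)` (`G` is Class 1). -/
theorem class1_of_maxDegree_acyclic [Fintype V] (G : SimpleGraph V)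
    [DecidableRel G.Adj]
    (hac : (SimpleGraph.induce {v | G.degree v = G.maxDegree} G).IsAcyclic)
    (hne : G.edgeSet.Nonempty) :
    chromaticIndex G = G.maxDegree := by
  have hinst : ‹DecidableRel G.Adj› = (fun a b => Classical.propDecidable (G.Adj a b)) := by
    funext p q
    exact Subsingleton.elim _ _
  subst hinst
  obtain ⟨a, b, hab⟩ := Fournier.exists_adj_of_nonempty hne
  have hNE : Nonempty V := ⟨a⟩
  have hmain : ∃ f, IsProperEdgeColoring G (G.maxDegree) f :=
    Fournier.main_exists G G.maxDegree (fun v => G.degree_le_maxDegree v) hac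
  have hlow : ∀ s ∈ {t | ∃ f, IsProperEdgeColoring G t f}, G.maxDegree ≤ s := by
    rintro s ⟨f, hf⟩
    obtain ⟨v, hv⟩ := G.exists_maximal_degree_vertex
    rw [hv]
    have hmaps : ∀ w ∈ G.neighborFinset v, f s(v, w) ∈ Finset.Icc 1 s := by
      intro w hw
      rw [SimpleGraph.mem_neighborFinset] at hw
      exact hf.1 _ ((SimpleGraph.mem_edgeSet G).2 hw)
    have hinj2 : Set.InjOn (fun w => f s(v, w)) ↑(G.neighborFinset v) := by
      intro w₁ hw₁ w₂ hw₂ heq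
      simp only [Finset.mem_coe, SimpleGraph.mem_neighborFinset] at hw₁ hw₂
      by_contra hnew
      have he₁ : s(v, w₁) ∈ G.edgeSet := (SimpleGraph.mem_edgeSet G).2 hw₁
      have he₂ : s(v, w₂) ∈ G.edgeSet := (SimpleGraph.mem_edgeSet G).2 hw₂
      have hedne : s(v, w₁) ≠ s(v, w₂) := by
        intro h
        rcases Sym2.eq_iff.1 h with ⟨_, h2⟩ | ⟨_, h2⟩
        · exact hnew h2
        · exact hw₁.ne h2.symm
      exact hf.2 _ he₁ _ he₂ hedne ⟨v, Sym2.mem_mk_left v w₁, Sym2.mem_mk_left v w₂⟩ heq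
    have hle := Finset.card_le_card_of_injOn _ hmaps hinj2
    rw [Nat.card_Icc] at hle
    have : G.degree v = (G.neighborFinset v).card := rfl
    omega
  have hmem : G.maxDegree ∈ {t | ∃ f, IsProperEdgeColoring G t f} := hmain
  have h1 : sInf {t | ∃ f, IsProperEdgeColoring G t f} ≤ G.maxDegree := Nat.sInf_le hmem
  have h2 : G.maxDegree ≤ sInf {t | ∃ f, IsProperEdgeColoring G t f} :=
    hlow _ (Nat.sInf_mem ⟨_, hmem⟩)
  exact le_antisymm h1 h2
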